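/- Let X be a finite solvable group with a faithful 2-transitive action on a set Ω of composite cardinality, and suppose some point stabilizer is cyclic and core-free while X contains a regular dihedral subgroup D. Then X ≅ A_4 (and D ≅ Z_2 × Z_2). -/

import Mathlib

private lemma sign_eq_one_of_fpf : ∀ σ : Equiv.Perm (Fin 4), σ ^ 2 = 1 →
    (∀ i, σ i ≠ i) → Equiv.Perm.sign σ = 1 := by decide

private def permCongrMulEquiv {α β : Type*} (e : α ≃ β) :
    Equiv.Perm α ≃* Equiv.Perm β :=
  { Equiv.permCongr e with
    map_mul' := fun p q => Equiv.ext fun b => by simp [Equiv.permCongr_apply] }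

/-- A finite solvable faithful 2-transitive group of composite degree with a cyclic
core-free point stabilizer and a regular dihedral subgroup is `A₄`, and the dihedral
subgroup is the Klein four-group. -/
theorem solvable_two_transitive_dihedral_eq_A4 {X Ω : Type*} [Group X] [Finite X]
    [Finite Ω] [MulAction X Ω] (hsolv : IsSolvable X)
    (hfaithful : ∀ g : X, (∀ ω : Ω, g • ω = ω) → g = 1)
    (h2trans : ∀ α β γ δ : Ω, α ≠ β → γ ≠ δ → ∃ g : X, g • α = γ ∧ g • β = δ)
    (hΩ : 1 < Nat.card Ω) (hnp : ¬ (Nat.card Ω).Prime)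
    (α : Ω) (hcyc : IsCyclic (MulAction.stabilizer X α))
    (hcorefree : (MulAction.stabilizer X α).normalCore = ⊥)
    (D : Subgroup X) (n : ℕ) (hn : 2 ≤ n) (a b : X)
    (hDgen : D = Subgroup.closure {a, b})
    (hoa : orderOf a = n) (hob : orderOf b = 2)
    (hrel : b * a * b⁻¹ = a⁻¹) (hcardD : Nat.card D = 2 * n)
    (hDtrans : ∀ ω₁ ω₂ : Ω, ∃ g ∈ D, g • ω₁ = ω₂)
    (hDfree : ∀ g ∈ D, ∀ ω : Ω, g • ω = ω → g = 1) :
    Nonempty (X ≃* alternatingGroup (Fin 4)) ∧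
    Nonempty (D ≃* Multiplicative (ZMod 2 × ZMod 2)) := by
  classical
  haveI : Fact (Nat.Prime 2) := ⟨Nat.prime_two⟩
  haveI hΩnt : Nontrivial Ω := Finite.one_lt_card_iff_nontrivial.mp hΩ
  -- X acts transitively
  have htrans : ∀ β γ : Ω, ∃ g : X, g • β = γ := by
    intro β γ
    obtain ⟨β', hβ'⟩ := exists_ne β
    obtain ⟨γ', hγ'⟩ := exists_ne γ
    obtain ⟨g, hg1, _⟩ := h2trans β β' γ γ' (Ne.symm hβ') (Ne.symm hγ')
    exact ⟨g, hg1⟩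
  -- X is nontrivial
  have hXnt : ∃ g : X, g ≠ 1 := by
    obtain ⟨ω₁, ω₂, hne⟩ := exists_pair_ne Ω
    obtain ⟨g, hg⟩ := htrans ω₁ ω₂
    refine ⟨g, fun h => hne ?_⟩
    rw [h, one_smul] at hg
    rw [hg]
  -- construct the normal subgroup N
  have hex : ∃ k, derivedSeries X k = ⊥ := hsolv.solvable
  set k := Nat.find hex with hk
  have hkbot : derivedSeries X k = ⊥ := Nat.find_spec hex
  have hk0 : k ≠ 0 := by
    intro h
    rw [h, derivedSeries_zero] at hkbot
    obtain ⟨g, hg⟩ := hXnt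
    exact hg (Subgroup.mem_bot.mp (hkbot ▸ Subgroup.mem_top g))
  set N := derivedSeries X (k - 1) with hNdef
  have hNbot : N ≠ ⊥ := Nat.find_min hex (by omega)
  haveI hNnormal : N.Normal := derivedSeries_normal X (k - 1)
  have hNcomm : ∀ x ∈ N, ∀ y ∈ N, x * y = y * x := by
    intro x hx y hy
    open scoped commutatorElement in
    have hmem : ⁅x, y⁆ ∈ derivedSeries X k := by
      have hh : k - 1 + 1 = k := by omega
      rw [← hh, derivedSeries_succ]
      exact Subgroup.commutator_mem_commutator hx hy
    rw [hkbot, Subgroup.mem_bot] at hmem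
    exact commutatorElement_eq_one_iff_mul_comm.mp hmem
  -- a nontrivial element of N
  obtain ⟨x₀, hx₀N, hx₀ne⟩ : ∃ x ∈ N, x ≠ 1 := by
    by_contra h
    push_neg at h
    exact hNbot ((Subgroup.eq_bot_iff_forall N).mpr h)
  -- N acts transitively
  have hNtrans : ∀ β γ : Ω, ∃ x ∈ N, x • β = γ := by
    intro β γ
    by_cases hβγ : β = γ
    · exact ⟨1, N.one_mem, by simp [hβγ]⟩
    obtain ⟨ω, hω⟩ : ∃ ω : Ω, x₀ • ω ≠ ω := by
      by_contra h; push_neg at h; exact hx₀ne (hfaithful x₀ h)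
    obtain ⟨g, hg1, hg2⟩ := h2trans ω (x₀ • ω) β γ (Ne.symm hω) hβγ
    refine ⟨g * x₀ * g⁻¹, hNnormal.conj_mem x₀ hx₀N g, ?_⟩
    have hωβ : g⁻¹ • β = ω := by rw [inv_smul_eq_iff, hg1]
    rw [mul_smul, mul_smul, hωβ, hg2]
  -- N acts freely
  have hNfree : ∀ x ∈ N, ∀ ω : Ω, x • ω = ω → x = 1 := by
    intro x hx ω hω
    apply hfaithful
    intro ω'
    obtain ⟨m', hm'N, hm'⟩ := hNtrans ω ω'
    rw [← hm', ← mul_smul, hNcomm x hx m' hm'N, mul_smul, hω]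
  -- |Ω| = 2n
  have hcardΩ : Nat.card Ω = 2 * n := by
    rw [← hcardD]
    symm
    apply Nat.card_eq_of_bijective (fun d : D => (d : X) • α)
    constructor
    · intro d₁ d₂ h
      have h' : (d₁ : X) • α = (d₂ : X) • α := h
      have hfix : ((d₂⁻¹ * d₁ : D) : X) • α = α := by
        push_cast [mul_smul]
        rw [h', ← mul_smul, inv_mul_cancel, one_smul]
      have := hDfree _ (d₂⁻¹ * d₁ : D).2 α hfix
      have h1 : (d₂⁻¹ * d₁ : D) = 1 := by exact_mod_cast this
      rw [inv_mul_eq_one] at h1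
      exact h1.symm
    · intro ω
      obtain ⟨g, hgD, hg⟩ := hDtrans α ω
      exact ⟨⟨g, hgD⟩, hg⟩
  -- |N| = 2n
  have hcardN : Nat.card N = 2 * n := by
    rw [← hcardΩ]
    apply Nat.card_eq_of_bijective (fun x : N => (x : X) • α)
    constructor
    · intro x₁ x₂ h
      have h' : (x₁ : X) • α = (x₂ : X) • α := h
      have hfix : ((x₂⁻¹ * x₁ : N) : X) • α = α := by
        push_cast [mul_smul]
        rw [h', ← mul_smul, inv_mul_cancel, one_smul]
      have := hNfree _ (x₂⁻¹ * x₁ : N).2 α hfix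
      have h1 : (x₂⁻¹ * x₁ : N) = 1 := by exact_mod_cast this
      rw [inv_mul_eq_one] at h1
      exact h1.symm
    · intro ω
      obtain ⟨x, hxN, hx⟩ := hNtrans α ω
      exact ⟨⟨x, hxN⟩, hx⟩
  -- conjugation by the stabilizer is transitive on nontrivial elements of N
  have hconj : ∀ x ∈ N, ∀ y ∈ N, x ≠ 1 → y ≠ 1 →
      ∃ g ∈ MulAction.stabilizer X α, g * x * g⁻¹ = y := by
    intro x hx y hy hx1 hy1
    have hxα : x • α ≠ α := fun h => hx1 (hNfree x hx α h)
    have hyα : y • α ≠ α := fun h => hy1 (hNfree y hy α h)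
    obtain ⟨g, hg1, hg2⟩ := h2trans α (x • α) α (y • α) (Ne.symm hxα) (Ne.symm hyα)
    refine ⟨g, hg1, ?_⟩
    have hginv : g⁻¹ • α = α := by rw [inv_smul_eq_iff, hg1]
    have hz : (g * x * g⁻¹) • α = y • α := by
      rw [mul_smul, mul_smul, hginv, hg2]
    have hmem : y⁻¹ * (g * x * g⁻¹) ∈ N :=
      N.mul_mem (N.inv_mem hy) (hNnormal.conj_mem x hx g)
    have hfix : (y⁻¹ * (g * x * g⁻¹)) • α = α := by
      rw [mul_smul, hz, ← mul_smul, inv_mul_cancel, one_smul]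
    have h1 := hNfree _ hmem α hfix
    rw [inv_mul_eq_one] at h1
    exact h1.symm
  -- every nontrivial element of N has order two
  obtain ⟨t₀, ht₀⟩ := exists_prime_orderOf_dvd_card' (G := N) 2 (by rw [hcardN]; exact ⟨n, rfl⟩)
  have ht₀X : orderOf (t₀ : X) = 2 := by rw [Subgroup.orderOf_coe]; exact ht₀
  have ht₀1 : (t₀ : X) ≠ 1 := by
    intro h; rw [h, orderOf_one] at ht₀X; omega
  have horder2 : ∀ x ∈ N, x ≠ 1 → x * x = 1 := by
    intro x hx hx1
    obtain ⟨g, hgS, hgconj⟩ := hconj x hx (t₀ : X) t₀.2 hx1 ht₀1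
    have hox : orderOf x = 2 := by
      rw [← ht₀X, ← hgconj]
      exact SemiconjBy.orderOf_eq g (show g * x = (g * x * g⁻¹) * g by group)
    rw [← pow_two]
    rw [← hox]
    exact pow_orderOf_eq_one x
  -- the stabilizer is commutative (being cyclic)
  have hcomm_stab : ∀ s t : MulAction.stabilizer X α, (s : X) * (t : X) = (t : X) * (s : X) := by
    intro s t
    obtain ⟨gen, hgen⟩ := hcyc.exists_generator
    obtain ⟨i, hi⟩ := hgen s
    obtain ⟨j, hj⟩ := hgen t
    have : s * t = t * s := by
      rw [← hi, ← hj, ← zpow_add, ← zpow_add, add_comm]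
    have h2 := Subtype.ext_iff.mp this
    push_cast at h2
    exact h2
  -- an element of the stabilizer commuting with a nontrivial element of N is trivial
  have hcent : ∀ t ∈ MulAction.stabilizer X α,
      (∃ x ∈ N, x ≠ 1 ∧ t * x = x * t) → t = 1 := by
    rintro t htS ⟨x, hxN, hx1, htx⟩
    apply hfaithful
    have hcentN : ∀ y ∈ N, t * y = y * t := by
      intro y hyN
      by_cases hy1 : y = 1
      · simp [hy1]
      obtain ⟨g, hgS, hgconj⟩ := hconj x hxN y hyN hx1 hy1
      have hcg : t * g = g * t := hcomm_stab ⟨t, htS⟩ ⟨g, hgS⟩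
      have hxt : t * x * t⁻¹ = x := by rw [htx]; group
      have key : t * y * t⁻¹ = y := by
        rw [← hgconj]
        calc t * (g * x * g⁻¹) * t⁻¹
            = (t * g) * x * (t * g)⁻¹ := by group
          _ = (g * t) * x * (g * t)⁻¹ := by rw [hcg]
          _ = g * (t * x * t⁻¹) * g⁻¹ := by group
          _ = g * x * g⁻¹ := by rw [hxt]
      exact mul_inv_eq_iff_eq_mul.mp key
    intro ω
    obtain ⟨m', hm'N, hm'⟩ := hNtrans α ω
    have htα : t • α = α := htS
    rw [← hm', ← mul_smul, hcentN m' hm'N, mul_smul, htα]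
  -- the stabilizer has odd order
  have hstab_odd : ¬ 2 ∣ Nat.card (MulAction.stabilizer X α) := by
    intro h2
    obtain ⟨t, ht⟩ := exists_prime_orderOf_dvd_card' (G := MulAction.stabilizer X α) 2 h2
    have htX : orderOf (t : X) = 2 := by rw [Subgroup.orderOf_coe]; exact ht
    have ht1 : (t : X) ≠ 1 := by intro h; rw [h, orderOf_one] at htX; omega
    have htsq : (t : X) * (t : X) = 1 := by
      rw [← pow_two, ← htX]; exact pow_orderOf_eq_one _
    have ht2 : (t : X)⁻¹ = (t : X) := inv_eq_of_mul_eq_one_right htsq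
    set c := (t : X) * x₀ * (t : X)⁻¹ with hc
    have hcN : c ∈ N := hNnormal.conj_mem x₀ hx₀N t
    have hz' : (t : X) * (x₀ * c) * (t : X)⁻¹ = x₀ * c := by
      have hsplit : (t : X) * (x₀ * c) * (t : X)⁻¹ =
          ((t : X) * x₀ * (t : X)⁻¹) * ((t : X) * c * (t : X)⁻¹) := by group
      have hcc : (t : X) * c * (t : X)⁻¹ = x₀ := by
        have : (t : X) * c * (t : X)⁻¹ =
            ((t : X) * (t : X)) * x₀ * (((t : X) * (t : X)))⁻¹ := by rw [hc]; group
        rw [this, htsq]; group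
      rw [hsplit, hcc, ← hc]
      exact hNcomm c hcN x₀ hx₀N
    have hz : (t : X) * (x₀ * c) = (x₀ * c) * (t : X) := by
      rw [mul_inv_eq_iff_eq_mul] at hz'
      exact hz'
    by_cases hxc : x₀ * c = 1
    · have hx₀sq := horder2 x₀ hx₀N hx₀ne
      have hcx : c = x₀ := by
        have h1 : c = x₀⁻¹ := by
          rw [← one_mul c, ← inv_mul_cancel x₀, mul_assoc, hxc, mul_one]
        rw [h1, inv_eq_of_mul_eq_one_right hx₀sq]
      have hcomm : (t : X) * x₀ = x₀ * (t : X) := by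
        have : (t : X) * x₀ * (t : X)⁻¹ = x₀ := by rw [← hc, hcx]
        rw [mul_inv_eq_iff_eq_mul] at this
        exact this
      exact ht1 (hcent (t : X) t.2 ⟨x₀, hx₀N, hx₀ne, hcomm⟩)
    · exact ht1 (hcent (t : X) t.2 ⟨x₀ * c, N.mul_mem hx₀N hcN, hxc, hz⟩)
  -- orbit-stabilizer
  have horb : MulAction.orbit X α = Set.univ := by
    apply Set.eq_univ_of_forall
    intro ω
    obtain ⟨g, hg⟩ := htrans α ω
    exact ⟨g, hg⟩
  have hquot : Nat.card (X ⧸ MulAction.stabilizer X α) = 2 * n := by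
    rw [← Nat.card_congr (MulAction.orbitEquivQuotientStabilizer X α)]
    rw [Nat.card_congr (Equiv.setCongr horb), Nat.card_congr (Equiv.Set.univ Ω), hcardΩ]
  have hcardX : Nat.card X = (2 * n) * Nat.card (MulAction.stabilizer X α) := by
    rw [Subgroup.card_eq_card_quotient_mul_card_subgroup (MulAction.stabilizer X α), hquot]
  -- the quotient X/N has the same cardinality as the stabilizer
  have hcardQN : Nat.card (X ⧸ N) = Nat.card (MulAction.stabilizer X α) := by
    have h1 : Nat.card X = Nat.card (X ⧸ N) * Nat.card N :=
      Subgroup.card_eq_card_quotient_mul_card_subgroup N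
    rw [hcardN, hcardX] at h1
    have hpos : 0 < 2 * n := by omega
    apply Nat.eq_of_mul_eq_mul_left hpos
    rw [h1, mul_comm]
  -- N is a 2-group
  have hNpg : IsPGroup 2 N := by
    intro x
    refine ⟨1, ?_⟩
    by_cases hx1 : (x : X) = 1
    · have hx1' : x = 1 := by exact_mod_cast hx1
      simp [hx1']
    · have h2 := horder2 (x : X) x.2 hx1
      apply Subtype.ext
      push_cast
      rw [pow_two]
      exact h2
  obtain ⟨kk, hkk⟩ := hNpg.exists_card_eq
  -- D ≤ N, hence D = N
  have hDsubN : D ≤ N := by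
    intro d hdD
    have hdvd1 : orderOf d ∣ 2 * n := by
      rw [← hcardD]
      have h1 : orderOf (⟨d, hdD⟩ : D) ∣ Nat.card D := orderOf_dvd_natCard _
      rwa [Subgroup.orderOf_mk] at h1
    rw [← QuotientGroup.eq_one_iff]
    have h2 : orderOf ((d : X ⧸ N)) ∣ 2 ^ kk := by
      have := (orderOf_map_dvd (QuotientGroup.mk' N) d).trans hdvd1
      rwa [← hcardN, hkk] at this
    have h3 : orderOf ((d : X ⧸ N)) ∣ Nat.card (X ⧸ N) := orderOf_dvd_natCard _
    obtain ⟨j, hj, hje⟩ := (Nat.dvd_prime_pow Nat.prime_two).mp h2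
    rw [← orderOf_eq_one_iff]
    rcases Nat.eq_zero_or_pos j with hj0 | hjpos
    · rw [hje, hj0, pow_zero]
    · exfalso
      apply hstab_odd
      rw [← hcardQN]
      calc (2 : ℕ) ∣ 2 ^ j := dvd_pow_self 2 (by omega)
        _ = orderOf ((d : X ⧸ N)) := hje.symm
        _ ∣ Nat.card (X ⧸ N) := h3
  have hDN : D = N := Subgroup.eq_of_le_of_card_ge hDsubN (by rw [hcardN, hcardD])
  -- n = 2
  have haD : a ∈ D := hDgen ▸ Subgroup.subset_closure (by simp)
  have hbD : b ∈ D := hDgen ▸ Subgroup.subset_closure (by simp)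
  have haN : a ∈ N := hDsubN haD
  have hbN : b ∈ N := hDsubN hbD
  have ha1 : a ≠ 1 := by intro h; rw [h, orderOf_one] at hoa; omega
  have hb1 : b ≠ 1 := by intro h; rw [h, orderOf_one] at hob; omega
  have hn2 : n = 2 := by
    have haa := horder2 a haN ha1
    have hdvd : orderOf a ∣ 2 := orderOf_dvd_of_pow_eq_one (by rw [pow_two]; exact haa)
    rw [hoa] at hdvd
    have := Nat.le_of_dvd (by norm_num) hdvd
    omega
  -- the permutation representation
  haveI : Fintype Ω := Fintype.ofFinite Ω
  set φ := MulAction.toPermHom X Ω with hφ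
  have hφinj : Function.Injective φ := by
    rw [← MonoidHom.ker_eq_bot_iff]
    apply (Subgroup.eq_bot_iff_forall _).mpr
    intro g hg
    apply hfaithful
    intro ω
    have h1 : φ g = 1 := hg
    have : φ g ω = ω := by rw [h1]; rfl
    exact this
  have hcard24 : Nat.card (Equiv.Perm Ω) = 24 := by
    rw [Nat.card_eq_fintype_card, Fintype.card_perm]
    have hΩ4 : Fintype.card Ω = 4 := by
      rw [← Nat.card_eq_fintype_card, hcardΩ, hn2]
    rw [hΩ4]
    rfl
  have hdvd24 : Nat.card X ∣ 24 := by
    rw [← hcard24]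
    have h1 : Nat.card X = Nat.card φ.range :=
      Nat.card_congr (MonoidHom.ofInjective hφinj).toEquiv
    rw [h1]
    exact Subgroup.card_subgroup_dvd_card φ.range
  -- |stabilizer| = 3
  have hab : a ≠ b := by
    intro h
    have hD2 : D = Subgroup.closure {b} := by
      rw [hDgen, h]
      congr 1
      simp
    have : Nat.card D = 2 := by
      rw [hD2, ← Subgroup.zpowers_eq_closure, Nat.card_zpowers, hob]
    omega
  have hS3 : Nat.card (MulAction.stabilizer X α) = 3 := by
    have h4 : Nat.card X = 4 * Nat.card (MulAction.stabilizer X α) := by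
      rw [hcardX, hn2]
    have hdvd6 : Nat.card (MulAction.stabilizer X α) ∣ 6 := by
      have h24 : 4 * Nat.card (MulAction.stabilizer X α) ∣ 4 * 6 := by
        rw [← h4]; exact hdvd24
      exact (mul_dvd_mul_iff_left (by norm_num : (4 : ℕ) ≠ 0)).mp h24
    have hdvd3 : Nat.card (MulAction.stabilizer X α) ∣ 3 := by
      have hco : Nat.Coprime (Nat.card (MulAction.stabilizer X α)) 2 := by
        rw [Nat.coprime_two_right, Nat.not_even_iff_odd.symm, even_iff_two_dvd]
        exact hstab_odd
      have h6 : (6 : ℕ) = 2 * 3 := by norm_num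
      rw [h6] at hdvd6
      exact hco.dvd_of_dvd_mul_left hdvd6
    rcases (Nat.prime_three.eq_one_or_self_of_dvd _ hdvd3) with h1 | h3
    · exfalso
      have hSbot : MulAction.stabilizer X α = ⊥ := Subgroup.card_eq_one.mp h1
      obtain ⟨g, hgS, hgconj⟩ := hconj a haN b hbN ha1 hb1
      rw [hSbot, Subgroup.mem_bot] at hgS
      rw [hgS] at hgconj
      simp at hgconj
      exact hab hgconj
    · exact h3
  -- remaining: build the isomorphisms
  have hcardX12 : Nat.card X = 12 := by rw [hcardX, hn2, hS3]
  have hcardQN3 : Nat.card (X ⧸ N) = 3 := by rw [hcardQN, hS3]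
  have hΩ4 : Fintype.card Ω = 4 := by rw [← Nat.card_eq_fintype_card, hcardΩ, hn2]
  let e : Ω ≃ Fin 4 := Fintype.equivFinOfCardEq hΩ4
  set ψ : X →* Equiv.Perm (Fin 4) := (permCongrMulEquiv e).toMonoidHom.comp φ with hψ
  have hψinj : Function.Injective ψ := (permCongrMulEquiv e).injective.comp hφinj
  have hNsign : ∀ x ∈ N, Equiv.Perm.sign (ψ x) = 1 := by
    intro x hxN
    by_cases hx1 : x = 1
    · rw [hx1, map_one, map_one]
    · apply sign_eq_one_of_fpf
      · rw [← map_pow]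
        have hx2 : x ^ 2 = 1 := by rw [pow_two]; exact horder2 x hxN hx1
        rw [hx2, map_one]
      · intro i hi
        have h1 : e (x • e.symm i) = i := hi
        have h2 := congrArg e.symm h1
        rw [Equiv.symm_apply_apply] at h2
        exact hx1 (hNfree x hxN (e.symm i) h2)
  have hsign : ∀ g : X, Equiv.Perm.sign (ψ g) = 1 := by
    intro g
    have hg3 : g ^ 3 ∈ N := by
      have h1 : (QuotientGroup.mk' N) (g ^ 3) = 1 := by
        rw [map_pow, ← hcardQN3]
        exact pow_card_eq_one'
      exact (QuotientGroup.eq_one_iff _).mp h1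
    have h1 : (Equiv.Perm.sign (ψ g)) ^ 3 = 1 := by
      rw [← map_pow, ← map_pow]
      exact hNsign _ hg3
    have h2 : (Equiv.Perm.sign (ψ g)) ^ 2 = 1 := Int.units_sq _
    have h3 : Equiv.Perm.sign (ψ g) =
        (Equiv.Perm.sign (ψ g)) ^ 3 * ((Equiv.Perm.sign (ψ g)) ^ 2)⁻¹ := by group
    rw [h3, h1, h2]
    simp
  have hA4card : Nat.card (alternatingGroup (Fin 4)) = 12 := by
    rw [Nat.card_eq_fintype_card]
    have h := two_mul_card_alternatingGroup (α := Fin 4)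
    rw [Fintype.card_perm, Fintype.card_fin] at h
    have h24 : Nat.factorial 4 = 24 := rfl
    rw [h24] at h
    omega
  have hrangecard : Nat.card ψ.range = 12 := by
    rw [← Nat.card_congr (MonoidHom.ofInjective hψinj).toEquiv, hcardX12]
  have hrange : ψ.range = alternatingGroup (Fin 4) := by
    apply Subgroup.eq_of_le_of_card_ge
    · rintro σ ⟨g, rfl⟩
      exact Equiv.Perm.mem_alternatingGroup.mpr (hsign g)
    · rw [hA4card, hrangecard]
  constructor
  · exact ⟨(MonoidHom.ofInjective hψinj).trans (MulEquiv.subgroupCongr hrange)⟩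
  · haveI : IsKleinFour D := by
      constructor
      · rw [hcardD, hn2]
      · apply Nat.dvd_antisymm
        · apply Monoid.exponent_dvd_of_forall_pow_eq_one
          intro x
          by_cases hx1 : (x : X) = 1
          · have hx1' : x = 1 := by exact_mod_cast hx1
            rw [hx1']
            simp
          · apply Subtype.ext
            push_cast
            rw [pow_two]
            exact horder2 (x : X) (hDsubN x.2) hx1
        · rw [← hob, ← Subgroup.orderOf_mk b hbD]
          exact Monoid.order_dvd_exponent _
    exact IsKleinFour.nonempty_mulEquiv
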